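/- Let k ≥ 1 be an integer and define a sequence (a_m)_{m≥0} of complex numbers by a_m = (n^k)! if m = n^k for some n ∈ ℕ, n ≥ 1, and a_m = 0 otherwise. Then limsup_{m→∞} |a_m|^{1/m} = ∞ (the power series ∑ a_m z^m has null radius of convergence) and its gauge equals 1; that is, for every γ ∈ (0,1), liminf_{n→∞} ( max_{(1-γ)n ≤ j ≤ n} |a_j|^{1/j} ) / ( max_{1 ≤ j ≤ n} |a_j|^{1/j} ) = 1. -/

import Mathlib

open Filter Polynomial
open scoped Classical Real Topology

lemma fact_rpow_step (j : ℕ) (hj : 1 ≤ j) :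
    ((j.factorial : ℝ)) ^ ((j : ℝ)⁻¹) ≤ (((j+1).factorial : ℝ)) ^ (((j:ℝ)+1)⁻¹) := by
  have hx0 : (0:ℝ) ≤ (j.factorial : ℝ) := by positivity
  have hy0 : (0:ℝ) ≤ ((j+1).factorial : ℝ) := by positivity
  have hjR : (0:ℝ) < (j:ℝ) := by exact_mod_cast hj
  have hnat : (j.factorial) ^ (j+1) ≤ ((j+1).factorial) ^ j := by
    have h1 : j.factorial ≤ (j+1)^j :=
      le_trans (Nat.factorial_le_pow j) (Nat.pow_le_pow_left (by omega) j)
    calc (j.factorial) ^ (j+1) = (j.factorial)^j * j.factorial := by ring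
      _ ≤ (j.factorial)^j * (j+1)^j := Nat.mul_le_mul_left _ h1
      _ = (j.factorial * (j+1))^j := by rw [mul_pow]
      _ = ((j+1).factorial)^j := by rw [Nat.factorial_succ, Nat.mul_comm]
  rw [← pow_le_pow_iff_left₀ (Real.rpow_nonneg hx0 _) (Real.rpow_nonneg hy0 _)
      (show j*(j+1) ≠ 0 by positivity)]
  rw [← Real.rpow_natCast ((j.factorial:ℝ) ^ ((j:ℝ)⁻¹)) (j*(j+1)),
      ← Real.rpow_natCast (((j+1).factorial:ℝ) ^ (((j:ℝ)+1)⁻¹)) (j*(j+1)),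
      ← Real.rpow_mul hx0, ← Real.rpow_mul hy0]
  have e1 : (j:ℝ)⁻¹ * ((j*(j+1) : ℕ) : ℝ) = ((j+1 : ℕ) : ℝ) := by
    push_cast; field_simp
  have e2 : ((j:ℝ)+1)⁻¹ * ((j*(j+1) : ℕ) : ℝ) = ((j : ℕ) : ℝ) := by
    push_cast; field_simp
  rw [e1, e2, Real.rpow_natCast, Real.rpow_natCast]
  exact_mod_cast hnat

lemma fact_rpow_mono {i j : ℕ} (hi : 1 ≤ i) (hij : i ≤ j) :
    ((i.factorial : ℝ)) ^ ((i : ℝ)⁻¹) ≤ ((j.factorial : ℝ)) ^ ((j : ℝ)⁻¹) := by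
  induction j, hij using Nat.le_induction with
  | base => exact le_refl _
  | succ n hn ih =>
      refine le_trans ih ?_
      have := fact_rpow_step n (le_trans hi hn)
      simpa [Nat.cast_add, Nat.cast_one] using this

/-- Example 2.1, second part. For an integer `k ≥ 1`, the power
series `f_k(z) = ∑_{n≥1} (n^k)! z^{n^k}` (so `a_m = m!` if `m = n^k` for some `n ≥ 1`,
and `a_m = 0` otherwise) has null radius of convergence and gauge `1`: for every
`γ ∈ (0,1)`,
`liminf_n (max_{(1-γ)n ≤ j ≤ n} |a_j|^{1/j}) / (max_{1 ≤ j ≤ n} |a_j|^{1/j}) = 1`. -/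
theorem stmt_17 (k : ℕ) (a : ℕ → ℂ) (A : ℕ → ℝ) (B : ℝ → ℕ → ℝ)
    (hk : 1 ≤ k)
    (ha : ∀ m : ℕ, a m = if ∃ n : ℕ, 1 ≤ n ∧ m = n ^ k then (Nat.factorial m : ℂ) else 0)
    (hA : ∀ n : ℕ, 1 ≤ n → IsGreatest
      {x : ℝ | ∃ j : ℕ, 1 ≤ j ∧ j ≤ n ∧ x = ‖a j‖ ^ ((j : ℝ)⁻¹)} (A n))
    (hB : ∀ γ ∈ Set.Ioo (0 : ℝ) 1, ∀ n : ℕ, 1 ≤ n → IsGreatest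
      {x : ℝ | ∃ j : ℕ, (1 - γ) * (n : ℝ) ≤ (j : ℝ) ∧ j ≤ n ∧
        x = ‖a j‖ ^ ((j : ℝ)⁻¹)} (B γ n)) :
    Filter.limsup
      (fun m : ℕ => ((‖a m‖ ^ ((m : ℝ)⁻¹) : ℝ) : EReal)) Filter.atTop = ⊤ ∧
    (∀ γ ∈ Set.Ioo (0 : ℝ) 1,
      Filter.liminf (fun n : ℕ => ((B γ n / A n : ℝ) : EReal)) Filter.atTop = 1) := by
  constructor
  · rw [EReal.eq_top_iff_forall_lt]
    intro C
    set x : ℝ := max (C + 1) 1 with hxdef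
    have hx1 : (1:ℝ) ≤ x := le_max_right _ _
    have hx0 : (0:ℝ) < x := lt_of_lt_of_le one_pos hx1
    -- eventually x^m < m!
    have hev : ∀ᶠ m : ℕ in atTop, x ^ m / (m.factorial : ℝ) < 1 :=
      (FloorSemiring.tendsto_pow_div_factorial_atTop x).eventually (gt_mem_nhds one_pos)
    obtain ⟨m₀, hm₀⟩ := eventually_atTop.mp hev
    have hfreq : ∃ᶠ m : ℕ in atTop,
        ((x : ℝ) : EReal) ≤ ((‖a m‖ ^ ((m : ℝ)⁻¹) : ℝ) : EReal) := by
      rw [frequently_atTop]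
      intro N
      set n : ℕ := max (max N m₀) 1 with hndef
      have hn1 : 1 ≤ n := le_max_right _ _
      set m : ℕ := n ^ k with hmdef
      have hnm : n ≤ m := Nat.le_self_pow (by omega) n
      have hmN : N ≤ m := le_trans (le_trans (le_max_left _ _) (le_max_left _ _)) hnm
      have hmm₀ : m₀ ≤ m := le_trans (le_trans (le_max_right _ _) (le_max_left _ _)) hnm
      have hm1 : 1 ≤ m := le_trans hn1 hnm
      refine ⟨m, hmN, ?_⟩
      have ham : a m = (m.factorial : ℂ) := by
        rw [ha m, if_pos ⟨n, hn1, rfl⟩]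
      rw [ham, Complex.norm_natCast]
      rw [EReal.coe_le_coe_iff]
      -- x ≤ (m!)^(1/m)
      have hlt : x ^ m ≤ (m.factorial : ℝ) := by
        have := hm₀ m hmm₀
        have hfp : (0:ℝ) < (m.factorial : ℝ) := by
          exact_mod_cast m.factorial_pos
        rw [div_lt_one hfp] at this
        exact this.le
      have : (x ^ m) ^ ((m:ℝ)⁻¹) ≤ (m.factorial : ℝ) ^ ((m:ℝ)⁻¹) :=
        Real.rpow_le_rpow (by positivity) hlt (by positivity)
      have hxm : (x ^ m) ^ ((m:ℝ)⁻¹) = x := by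
        rw [← Real.rpow_natCast x m, ← Real.rpow_mul hx0.le]
        have hmne : (m:ℝ) ≠ 0 := by
          have : 0 < m := hm1
          positivity
        rw [mul_inv_cancel₀ hmne, Real.rpow_one]
      rwa [hxm] at this
    have hle := le_limsup_of_frequently_le' hfreq
    refine lt_of_lt_of_le ?_ hle
    rw [EReal.coe_lt_coe_iff]
    exact lt_of_lt_of_le (by linarith) (le_max_left _ _)
  · intro γ hγ
    obtain ⟨hγ0, hγ1⟩ := hγ
    -- ratio (r/(r+1))^k → 1
    have h1 : Tendsto (fun r : ℕ => (r:ℝ)/((r:ℝ)+1)) atTop (𝓝 1) := by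
      have h0 := tendsto_one_div_add_atTop_nhds_zero_nat (𝕜 := ℝ)
      have h2 : Tendsto (fun r : ℕ => 1 - 1/((r:ℝ)+1)) atTop (𝓝 (1 - 0)) :=
        tendsto_const_nhds.sub h0
      rw [sub_zero] at h2
      refine h2.congr fun r => ?_
      have hr : ((r:ℝ)+1) ≠ 0 := by positivity
      field_simp
      ring
    have hlim : Tendsto (fun r : ℕ => ((r:ℝ)/((r:ℝ)+1))^k) atTop (𝓝 1) := by
      simpa using h1.pow k
    have hev1 : ∀ᶠ r : ℕ in atTop, (1-γ) < ((r:ℝ)/((r:ℝ)+1))^k :=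
      hlim.eventually (lt_mem_nhds (by linarith))
    obtain ⟨r₀, hr₀⟩ := eventually_atTop.mp hev1
    have hr₀' : ∀ r : ℕ, r₀ ≤ r → (1-γ) * ((r:ℝ)+1)^k ≤ (r:ℝ)^k := by
      intro r hr
      have h := hr₀ r hr
      have hp : (0:ℝ) < ((r:ℝ)+1)^k := by positivity
      rw [div_pow, lt_div_iff₀ hp] at h
      linarith
    have hev : ∀ᶠ n : ℕ in atTop, B γ n / A n = 1 := by
      filter_upwards [eventually_ge_atTop 1, eventually_ge_atTop (r₀ ^ k)]
        with n hn1 hnr₀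
      -- find r with r^k ≤ n < (r+1)^k
      have hexr : ∃ r : ℕ, n < (r+1)^k := by
        refine ⟨n, lt_of_lt_of_le (Nat.lt_succ_self n) (Nat.le_self_pow (by omega) _)⟩
      set r : ℕ := Nat.find hexr with hrdef
      have hub : n < (r+1)^k := Nat.find_spec hexr
      have hr1 : 1 ≤ r := by
        by_contra h
        have hr0 : r = 0 := by omega
        have := hub
        rw [hr0] at this
        simp at this
        omega
      have hlb : r ^ k ≤ n := by
        have hmin := Nat.find_min hexr (show r - 1 < r by omega)
        have hre : r - 1 + 1 = r := by omega
        rw [hre] at hmin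
        exact Nat.not_lt.mp hmin
      have hrr₀ : r₀ ≤ r := by
        by_contra h
        push_neg at h
        have : (r+1)^k ≤ r₀^k := Nat.pow_le_pow_left (by omega) k
        omega
      have hM1 : 1 ≤ r ^ k := Nat.one_le_pow _ _ (by omega)
      -- (1-γ) n ≤ r^k
      have hMγ : (1-γ) * (n:ℝ) ≤ ((r^k : ℕ):ℝ) := by
        have hnR : (n:ℝ) ≤ ((r:ℝ)+1)^k := by
          have : (n:ℝ) ≤ (((r+1)^k : ℕ) : ℝ) := by exact_mod_cast hub.le
          rwa [Nat.cast_pow, Nat.cast_add, Nat.cast_one] at this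
        calc (1-γ) * (n:ℝ) ≤ (1-γ) * ((r:ℝ)+1)^k :=
              mul_le_mul_of_nonneg_left hnR (by linarith)
          _ ≤ (r:ℝ)^k := hr₀' r hrr₀
          _ = ((r^k : ℕ):ℝ) := by rw [Nat.cast_pow]
      have haM : a (r^k) = ((r^k).factorial : ℂ) := by
        rw [ha (r^k), if_pos ⟨r, hr1, rfl⟩]
      have hvalM : ‖a (r^k)‖ ^ (((r^k : ℕ):ℝ))⁻¹
          = ((r^k).factorial : ℝ) ^ (((r^k : ℕ):ℝ))⁻¹ := by
        rw [haM, Complex.norm_natCast]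
      have hAel := hA n hn1
      have hBel := hB γ ⟨hγ0, hγ1⟩ n hn1
      -- val M bounds everything in A's set
      have hAleM : A n ≤ ‖a (r^k)‖ ^ (((r^k : ℕ):ℝ))⁻¹ := by
        obtain ⟨j, hj1, hjn, hje⟩ := hAel.1
        rw [hje]
        by_cases hc : ∃ s : ℕ, 1 ≤ s ∧ j = s ^ k
        · obtain ⟨s, hs1, rfl⟩ := hc
          have hsr : s ≤ r := by
            by_contra hsr
            push_neg at hsr
            have : (r+1)^k ≤ s^k := Nat.pow_le_pow_left (by omega) k
            omega
          have hjM : s^k ≤ r^k := Nat.pow_le_pow_left hsr k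
          rw [ha (s^k), if_pos ⟨s, hs1, rfl⟩, Complex.norm_natCast, hvalM]
          exact fact_rpow_mono hj1 hjM
        · rw [ha j, if_neg hc]
          simp only [norm_zero]
          rw [Real.zero_rpow (by
            have : (0:ℝ) < (j:ℝ) := by exact_mod_cast hj1
            positivity)]
          positivity
      have hMmem : ‖a (r^k)‖ ^ (((r^k : ℕ):ℝ))⁻¹ ∈
          {x : ℝ | ∃ j : ℕ, (1 - γ) * (n : ℝ) ≤ (j : ℝ) ∧ j ≤ n ∧
            x = ‖a j‖ ^ ((j : ℝ)⁻¹)} := ⟨r^k, hMγ, hlb, rfl⟩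
      have hAB : A n = B γ n := by
        apply le_antisymm
        · exact le_trans hAleM (hBel.2 hMmem)
        · obtain ⟨j, hj, hjn, hje⟩ := hBel.1
          have hj1 : 1 ≤ j := by
            have hpos : (0:ℝ) < (1-γ) * (n:ℝ) := by
              have : (0:ℝ) < (n:ℝ) := by exact_mod_cast hn1
              have := sub_pos.mpr hγ1
              positivity
            have : (0:ℝ) < (j:ℝ) := lt_of_lt_of_le hpos hj
            have hj0 : 0 < j := by exact_mod_cast this
            omega
          exact hAel.2 ⟨j, hj1, hjn, hje⟩
      have hApos : (0:ℝ) < A n := by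
        have hmemA : ‖a (r^k)‖ ^ (((r^k : ℕ):ℝ))⁻¹ ∈
            {x : ℝ | ∃ j : ℕ, 1 ≤ j ∧ j ≤ n ∧ x = ‖a j‖ ^ ((j : ℝ)⁻¹)} :=
          ⟨r^k, hM1, hlb, rfl⟩
        have hge1 : (1:ℝ) ≤ ‖a (r^k)‖ ^ (((r^k : ℕ):ℝ))⁻¹ := by
          rw [hvalM]
          exact Real.one_le_rpow (by exact_mod_cast (r^k).factorial_pos) (by positivity)
        linarith [hAel.2 hmemA]
      rw [← hAB, div_self (ne_of_gt hApos)]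
    have hcong : (fun n : ℕ => ((B γ n / A n : ℝ) : EReal)) =ᶠ[atTop]
        (fun _ : ℕ => (1 : EReal)) := hev.mono fun n h => by simp [h]
    rw [liminf_congr hcong, liminf_const]
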